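/- For all real numbers b and x: (b + ei(b)/Φᶜ(b) − x) / ei(x) ≤ 1/Φᶜ(b). -/

import Mathlib

open MeasureTheory

/-- The standard normal density `φ(x) = (2π)^{-1/2} exp(-x²/2)`. -/
noncomputable def stdNormalPDF (x : ℝ) : ℝ :=
  (Real.sqrt (2 * Real.pi))⁻¹ * Real.exp (-x ^ 2 / 2)

/-- The standard normal complementary CDF `Φᶜ(x) = ∫_x^∞ φ(u) du`. -/
noncomputable def stdNormalCCDF (x : ℝ) : ℝ :=
  ∫ u in Set.Ioi x, stdNormalPDF u

/-- The standard expected improvement `ei(x) = φ(x) - x·Φᶜ(x)`. -/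
noncomputable def stdEI (x : ℝ) : ℝ :=
  stdNormalPDF x - x * stdNormalCCDF x

lemma pdf_eq (x : ℝ) : stdNormalPDF x = (Real.sqrt (2 * Real.pi))⁻¹ * Real.exp (-(1/2) * x ^ 2) := by
  unfold stdNormalPDF; ring_nf

lemma pdf_pos (x : ℝ) : 0 < stdNormalPDF x := by
  unfold stdNormalPDF
  positivity

lemma pdf_cont : Continuous stdNormalPDF := by
  unfold stdNormalPDF
  continuity

lemma pdf_integrable : Integrable stdNormalPDF := by
  have : Integrable (fun x : ℝ => (Real.sqrt (2 * Real.pi))⁻¹ * Real.exp (-(1/2) * x ^ 2)) :=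
    (integrable_exp_neg_mul_sq (by norm_num)).const_mul _
  exact this.congr (Filter.Eventually.of_forall fun x => (pdf_eq x).symm)

lemma id_mul_pdf_integrable : Integrable (fun u : ℝ => u * stdNormalPDF u) := by
  have : Integrable (fun x : ℝ => (Real.sqrt (2 * Real.pi))⁻¹ * (x * Real.exp (-(1/2) * x ^ 2))) :=
    (integrable_mul_exp_neg_mul_sq (by norm_num)).const_mul _
  exact this.congr (Filter.Eventually.of_forall fun x => by simp only [pdf_eq]; ring)

lemma hasDerivAt_pdf (x : ℝ) : HasDerivAt stdNormalPDF (-x * stdNormalPDF x) x := by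
  have h1 : HasDerivAt (fun x : ℝ => -x ^ 2 / 2) (-x) x := by
    have := ((hasDerivAt_pow 2 x).neg).div_const 2
    simpa using this.congr_deriv (by ring)
  have := ((h1.exp).const_mul (Real.sqrt (2 * Real.pi))⁻¹)
  unfold stdNormalPDF
  convert this using 1
  · rfl
  · rfl
  · ring

lemma ccdf_eq (x : ℝ) :
    stdNormalCCDF x = stdNormalCCDF 0 - ∫ t in (0:ℝ)..x, stdNormalPDF t := by
  have h : ∀ a : ℝ, stdNormalCCDF a = (∫ u, stdNormalPDF u) - ∫ u in Set.Iic a, stdNormalPDF u := by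
    intro a
    rw [← intervalIntegral.integral_Iic_add_Ioi (pdf_integrable.integrableOn) (pdf_integrable.integrableOn)]
    unfold stdNormalCCDF; ring
  rw [h, h, ← intervalIntegral.integral_Iic_sub_Iic pdf_integrable.integrableOn
    pdf_integrable.integrableOn]
  ring

lemma hasDerivAt_ccdf (x : ℝ) : HasDerivAt stdNormalCCDF (-stdNormalPDF x) x := by
  have h : HasDerivAt (fun y => ∫ t in (0:ℝ)..y, stdNormalPDF t) (stdNormalPDF x) x :=
    intervalIntegral.integral_hasDerivAt_right (pdf_integrable.intervalIntegrable)
      (pdf_cont.aestronglyMeasurable.stronglyMeasurableAtFilter) pdf_cont.continuousAt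
  have := (h.const_sub (stdNormalCCDF 0))
  have heq : stdNormalCCDF = fun y => stdNormalCCDF 0 - ∫ t in (0:ℝ)..y, stdNormalPDF t :=
    funext fun y => ccdf_eq y
  rw [heq]
  exact this

lemma ccdf_pos (x : ℝ) : 0 < stdNormalCCDF x := by
  unfold stdNormalCCDF
  rw [setIntegral_pos_iff_support_of_nonneg_ae
    (Filter.Eventually.of_forall fun u => (pdf_pos u).le) pdf_integrable.integrableOn]
  have : Function.support stdNormalPDF = Set.univ :=
    Set.eq_univ_of_forall fun u => (pdf_pos u).ne'
  rw [this, Set.univ_inter]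
  simp [Real.volume_Ioi]

lemma tendsto_pdf_atTop : Filter.Tendsto stdNormalPDF Filter.atTop (nhds 0) := by
  unfold stdNormalPDF
  rw [show (0:ℝ) = (Real.sqrt (2 * Real.pi))⁻¹ * 0 by ring]
  apply Filter.Tendsto.const_mul
  apply Real.tendsto_exp_atBot.comp
  have : Filter.Tendsto (fun x : ℝ => x ^ 2 / 2) Filter.atTop Filter.atTop :=
    (Filter.tendsto_pow_atTop two_ne_zero).atTop_div_const (by norm_num)
  have h2 := Filter.tendsto_neg_atTop_atBot.comp this
  exact h2.congr fun x => by simp [Function.comp, neg_div]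

lemma integral_id_mul_pdf (a : ℝ) :
    ∫ u in Set.Ioi a, u * stdNormalPDF u = stdNormalPDF a := by
  have h : ∀ u ∈ Set.Ici a, HasDerivAt (fun v => -stdNormalPDF v) (u * stdNormalPDF u) u := by
    intro u _
    exact (hasDerivAt_pdf u).neg.congr_deriv (by ring)
  have := MeasureTheory.integral_Ioi_of_hasDerivAt_of_tendsto' h
    id_mul_pdf_integrable.integrableOn
    (by simpa using tendsto_pdf_atTop.neg)
  simpa using this

lemma ei_pos (x : ℝ) : 0 < stdEI x := by
  have key : stdEI x = ∫ u in Set.Ioi x, (u - x) * stdNormalPDF u := by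
    have : ∀ u : ℝ, (u - x) * stdNormalPDF u = u * stdNormalPDF u - x * stdNormalPDF u :=
      fun u => by ring
    simp_rw [this]
    rw [MeasureTheory.integral_sub id_mul_pdf_integrable.integrableOn
      ((pdf_integrable.integrableOn).const_mul x),
      MeasureTheory.integral_const_mul, integral_id_mul_pdf]
    rfl
  rw [key]
  rw [setIntegral_pos_iff_support_of_nonneg_ae]
  · have hsub : Set.Ioi (x+1) ⊆ Function.support (fun u => (u - x) * stdNormalPDF u) ∩ Set.Ioi x := by
      intro u hu
      have h1 : x < u := by linarith [Set.mem_Ioi.mp hu]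
      refine ⟨?_, h1⟩
      simp only [Function.mem_support]
      exact ne_of_gt (mul_pos (by linarith) (pdf_pos u))
    calc (0:ENNReal) < volume (Set.Ioi (x+1)) := by simp [Real.volume_Ioi]
      _ ≤ _ := measure_mono hsub
  · refine (ae_restrict_iff' measurableSet_Ioi).mpr (Filter.Eventually.of_forall fun u hu => ?_)
    have : x < u := hu
    exact mul_nonneg (by linarith) (pdf_pos u).le
  · exact (id_mul_pdf_integrable.integrableOn.sub ((pdf_integrable.integrableOn).const_mul x)).congr
      (Filter.Eventually.of_forall fun u => by simp [Pi.sub_apply]; ring)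

lemma ccdf_anti : Antitone stdNormalCCDF := by
  intro a c hac
  apply MeasureTheory.setIntegral_mono_set pdf_integrable.integrableOn
    (Filter.Eventually.of_forall fun u => (pdf_pos u).le)
  exact HasSubset.Subset.eventuallyLE (Set.Ioi_subset_Ioi hac)

lemma hasDerivAt_ei (x : ℝ) : HasDerivAt stdEI (-stdNormalCCDF x) x := by
  have h := (hasDerivAt_pdf x).sub ((hasDerivAt_id x).mul (hasDerivAt_ccdf x))
  exact h.congr_deriv (by simp only [id_eq, one_mul]; ring)

lemma tangent (b x : ℝ) : stdEI b + stdNormalCCDF b * (b - x) ≤ stdEI x := by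
  set g : ℝ → ℝ := fun t => stdEI t + stdNormalCCDF b * t with hg
  have hd : ∀ t : ℝ, HasDerivAt g (stdNormalCCDF b - stdNormalCCDF t) t := fun t =>
    ((hasDerivAt_ei t).add ((hasDerivAt_id t).const_mul (stdNormalCCDF b))).congr_deriv (by ring)
  have hdiff : Differentiable ℝ g := fun t => (hd t).differentiableAt
  have hgoal : g b ≤ g x := by
    rcases le_total b x with hbx | hxb
    · have hmono : MonotoneOn g (Set.Ici b) := by
        apply monotoneOn_of_deriv_nonneg (convex_Ici b) hdiff.continuous.continuousOn
          hdiff.differentiableOn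
        intro t ht
        rw [interior_Ici] at ht
        rw [(hd t).deriv]
        linarith [ccdf_anti (le_of_lt ht)]
      exact hmono Set.self_mem_Ici hbx hbx
    · have hanti : AntitoneOn g (Set.Iic b) := by
        apply antitoneOn_of_deriv_nonpos (convex_Iic b) hdiff.continuous.continuousOn
          hdiff.differentiableOn
        intro t ht
        rw [interior_Iic] at ht
        rw [(hd t).deriv]
        linarith [ccdf_anti (le_of_lt ht)]
      exact hanti hxb Set.self_mem_Iic hxb
  simp only [hg] at hgoal
  nlinarith

/-- The 'optimizing for x' step in the proof of the paper's main theorem: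
`(b − ei(b)/ei'(b) − x)/ei(x) ≤ −1/ei'(b)` for all reals `b, x`
(recall `ei'(x) = −Φᶜ(x)`). -/
theorem stmt15 (b x : ℝ) :
    (b + stdEI b / stdNormalCCDF b - x) / stdEI x ≤ 1 / stdNormalCCDF b := by
  rw [div_le_div_iff₀ (ei_pos x) (ccdf_pos b)]
  have hcb := (ccdf_pos b).ne'
  have h : (b + stdEI b / stdNormalCCDF b - x) * stdNormalCCDF b
      = stdNormalCCDF b * (b - x) + stdEI b := by
    field_simp
    ring
  rw [h]
  linarith [tangent b x]
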